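/- The function g^(slope)(t) := Σ_{i=1}^n min(4·max(0, t_i), 1/n) on [0,1]^n is 1-stable and 4-Lipschitz with respect to the L¹ norm: (a) for every t, every α ∈ (0,1], and every α-light distribution D over subsets of [n], E_{R∼D}[min{g^(slope)(t') : t' ⊳_R t}] ≥ g^(slope)(t) − α; and (b) |g^(slope)(t) − g^(slope)(t')| ≤ 4·Σ_i |t_i − t'_i| for all t, t' ∈ [0,1]^n. -/
import Mathlib

open Finset

/-- The solid hypercube `[-1,1]^n`. -/
def cube (n : ℕ) : Set (Fin n → ℝ) := {t | ∀ i, t i ∈ Set.Icc (-1 : ℝ) 1}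

/-- The solid hypercube `[0,1]^n`. -/
def cube01 (n : ℕ) : Set (Fin n → ℝ) := {t | ∀ i, t i ∈ Set.Icc (0 : ℝ) 1}

/-- `D` is a probability distribution over subsets of `[n]`. -/
def IsDist {n : ℕ} (D : Finset (Fin n) → ℝ) : Prop :=
  (∀ R, 0 ≤ D R) ∧ ∑ R : Finset (Fin n), D R = 1

/-- `D` is `α`-light: each coordinate is corrupted with (marginal) probability at most `α`. -/
def IsLight {n : ℕ} (D : Finset (Fin n) → ℝ) (α : ℝ) : Prop :=
  ∀ i : Fin n, ∑ R ∈ Finset.univ.filter (fun R => i ∈ R), D R ≤ α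

/-- `min { g t' : t' ∈ K, t' ⊳_R t }`, the worst-case corruption of `t` on `R` within `K`. -/
noncomputable def corruptMin {n : ℕ} (K : Set (Fin n → ℝ)) (g : (Fin n → ℝ) → ℝ)
    (R : Finset (Fin n)) (t : Fin n → ℝ) : ℝ :=
  sInf (g '' {t' ∈ K | ∀ i ∉ R, t' i = t i})

/-- `g : K → ℝ` is `β`-(noise-)stable. -/
def Stable {n : ℕ} (K : Set (Fin n → ℝ)) (g : (Fin n → ℝ) → ℝ) (β : ℝ) : Prop :=
  ∀ t ∈ K, ∀ α : ℝ, α ∈ Set.Ioc (0 : ℝ) 1 →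
    ∀ D : Finset (Fin n) → ℝ, IsDist D → IsLight D α →
      g t - α * β ≤ ∑ R : Finset (Fin n), D R * corruptMin K g R t

/-- `g` is `c`-Lipschitz on `K` with respect to the `L^∞` norm. -/
def LipschitzLinf {n : ℕ} (K : Set (Fin n → ℝ)) (g : (Fin n → ℝ) → ℝ) (c : ℝ) : Prop :=
  ∀ t ∈ K, ∀ t' ∈ K, ∀ d : ℝ, 0 ≤ d → (∀ i, |t i - t' i| ≤ d) → |g t - g t'| ≤ c * d

/-- `g^(slope)(t) = Σᵢ min(4·max(0,tᵢ), 1/n)`. -/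
noncomputable def gSlope {n : ℕ} (t : Fin n → ℝ) : ℝ :=
  ∑ i, min (4 * max 0 (t i)) (1 / (n : ℝ))

theorem term_lip (n : ℕ) (a b : ℝ) :
    |min (4 * max 0 a) (1/(n:ℝ)) - min (4 * max 0 b) (1/(n:ℝ))| ≤ 4 * |a - b| := by
  have h1 := abs_min_sub_min_le_max (4 * max 0 a) (1/(n:ℝ)) (4 * max 0 b) (1/(n:ℝ))
  have h2 := abs_max_sub_max_le_abs a b (0:ℝ)
  rw [max_comm a 0, max_comm b 0] at h2
  refine h1.trans ?_
  have h3 : |4 * max 0 a - 4 * max 0 b| = 4 * |max 0 a - max 0 b| := by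
    rw [show 4 * max 0 a - 4 * max 0 b = 4 * (max 0 a - max 0 b) by ring, abs_mul,
      abs_of_nonneg (by norm_num : (0:ℝ) ≤ 4)]
  simp only [sub_self, abs_zero]
  rw [max_le_iff]
  exact ⟨by rw [h3]; nlinarith [abs_nonneg (a-b)], by positivity⟩

theorem term_nonneg (n : ℕ) (x : ℝ) : 0 ≤ min (4 * max 0 x) (1/(n:ℝ)) :=
  le_min (by positivity) (by positivity)

/-- `g^(slope)` is 1-stable on `[0,1]^n` and 4-Lipschitz in the `L¹` norm. -/
theorem gSlope_stable_and_L1_lipschitz {n : ℕ} :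
    Stable (cube01 n) (gSlope (n := n)) 1 ∧
      ∀ t ∈ cube01 n, ∀ t' ∈ cube01 n,
        |gSlope t - gSlope t'| ≤ 4 * ∑ i, |t i - t' i| := by
  constructor
  · intro t ht α hα D hD hL
    -- lower bound on corruptMin
    have key : ∀ R : Finset (Fin n),
        gSlope t - (R.card : ℝ) * (1/(n:ℝ)) ≤ corruptMin (cube01 n) gSlope R t := by
      intro R
      apply le_csInf
      · exact ⟨gSlope t, ⟨t, ⟨ht, fun i _ => rfl⟩, rfl⟩⟩
      · rintro b ⟨t', ⟨ht', heq⟩, rfl⟩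
        have hsum : gSlope t - gSlope t'
            = ∑ i, (min (4*max 0 (t i)) (1/(n:ℝ)) - min (4*max 0 (t' i)) (1/(n:ℝ))) := by
          unfold gSlope; rw [Finset.sum_sub_distrib]
        have h2 : ∑ i, (min (4*max 0 (t i)) (1/(n:ℝ)) - min (4*max 0 (t' i)) (1/(n:ℝ)))
            = ∑ i ∈ R, (min (4*max 0 (t i)) (1/(n:ℝ)) - min (4*max 0 (t' i)) (1/(n:ℝ))) := by
          symm
          apply Finset.sum_subset (Finset.subset_univ R)
          intro i _ hi
          rw [heq i hi]; ring
        have h3 : ∑ i ∈ R, (min (4*max 0 (t i)) (1/(n:ℝ)) - min (4*max 0 (t' i)) (1/(n:ℝ)))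
            ≤ ∑ _i ∈ R, (1/(n:ℝ)) := by
          apply Finset.sum_le_sum
          intro i _
          have ha := min_le_right (4*max 0 (t i)) (1/(n:ℝ))
          have hb := term_nonneg n (t' i)
          linarith
        rw [Finset.sum_const, nsmul_eq_mul] at h3
        rw [h2] at hsum
        linarith
    -- bound the expected corruption set size
    have hcard : ∑ R : Finset (Fin n), D R * (R.card : ℝ) ≤ (n : ℝ) * α := by
      have e1 : ∑ R : Finset (Fin n), D R * (R.card : ℝ)
          = ∑ R : Finset (Fin n), ∑ i : Fin n, (if i ∈ R then D R else 0) := by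
        refine Finset.sum_congr rfl fun R _ => ?_
        rw [Finset.sum_ite_mem, Finset.univ_inter, Finset.sum_const, nsmul_eq_mul, mul_comm]
      rw [e1, Finset.sum_comm]
      have e2 : ∀ i : Fin n, ∑ R : Finset (Fin n), (if i ∈ R then D R else 0)
          = ∑ R ∈ Finset.univ.filter (fun R => i ∈ R), D R := by
        intro i; rw [Finset.sum_filter]
      calc ∑ i : Fin n, ∑ R : Finset (Fin n), (if i ∈ R then D R else 0)
          ≤ ∑ _i : Fin n, α := by
            apply Finset.sum_le_sum
            intro i _
            rw [e2 i]; exact hL i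
        _ = (n : ℝ) * α := by rw [Finset.sum_const, card_univ, Fintype.card_fin, nsmul_eq_mul]
    have hS0 : 0 ≤ ∑ R : Finset (Fin n), D R * (R.card : ℝ) :=
      Finset.sum_nonneg fun R _ => mul_nonneg (hD.1 R) (by positivity)
    have step1 : ∑ R : Finset (Fin n), D R * (gSlope t - (R.card : ℝ) * (1/(n:ℝ)))
        ≤ ∑ R : Finset (Fin n), D R * corruptMin (cube01 n) gSlope R t :=
      Finset.sum_le_sum fun R _ => mul_le_mul_of_nonneg_left (key R) (hD.1 R)
    have expand : ∑ R : Finset (Fin n), D R * (gSlope t - (R.card : ℝ) * (1/(n:ℝ)))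
        = gSlope t - (∑ R : Finset (Fin n), D R * (R.card : ℝ)) * (1/(n:ℝ)) := by
      simp only [mul_sub, ← mul_assoc]
      rw [Finset.sum_sub_distrib, ← Finset.sum_mul, ← Finset.sum_mul, hD.2, one_mul]
    have hn1 : (n : ℝ) * (1/(n:ℝ)) ≤ 1 := by
      rcases eq_or_ne (n : ℝ) 0 with h | h
      · simp [h]
      · rw [mul_one_div, div_self h]
    have hinv : (0:ℝ) ≤ 1/(n:ℝ) := by positivity
    have hfin : (∑ R : Finset (Fin n), D R * (R.card : ℝ)) * (1/(n:ℝ)) ≤ α := by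
      calc (∑ R : Finset (Fin n), D R * (R.card : ℝ)) * (1/(n:ℝ))
          ≤ ((n:ℝ) * α) * (1/(n:ℝ)) := mul_le_mul_of_nonneg_right hcard hinv
        _ = α * ((n:ℝ) * (1/(n:ℝ))) := by ring
        _ ≤ α * 1 := mul_le_mul_of_nonneg_left hn1 (le_of_lt hα.1)
        _ = α := mul_one α
    rw [expand] at step1
    linarith
  · intro t _ t' _
    have hsum : gSlope t - gSlope t'
        = ∑ i, (min (4*max 0 (t i)) (1/(n:ℝ)) - min (4*max 0 (t' i)) (1/(n:ℝ))) := by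
      unfold gSlope; rw [Finset.sum_sub_distrib]
    rw [hsum]
    calc |∑ i, (min (4*max 0 (t i)) (1/(n:ℝ)) - min (4*max 0 (t' i)) (1/(n:ℝ)))|
        ≤ ∑ i, |min (4*max 0 (t i)) (1/(n:ℝ)) - min (4*max 0 (t' i)) (1/(n:ℝ))| :=
          Finset.abs_sum_le_sum_abs _ _
      _ ≤ ∑ i, 4 * |t i - t' i| := Finset.sum_le_sum fun i _ => term_lip n (t i) (t' i)
      _ = 4 * ∑ i, |t i - t' i| := by rw [Finset.mul_sum]
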